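/- Let R be a G-graded ring. If the group ring R[G] (with its G-grading) is graded NR-clean, then R is an NR-clean ring. -/

import Mathlib

/-- An element is homogeneous w.r.t. a grading family `𝒜` if it lies in some component. -/
def Homogeneous {G : Type*} [Group G] {R : Type*} [Ring R]
    (𝒜 : G → AddSubgroup R) (x : R) : Prop := ∃ g, x ∈ 𝒜 g

/-- A graded-regular element: homogeneous `r` with `r = r * a * r` for some homogeneous `a`. -/
def GradedRegular {G : Type*} [Group G] {R : Type*} [Ring R]
    (𝒜 : G → AddSubgroup R) (r : R) : Prop :=
  Homogeneous 𝒜 r ∧ ∃ a : R, Homogeneous 𝒜 a ∧ r = r * a * r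

/-- Graded NR-clean: every homogeneous element is a sum of a graded-regular element
and a homogeneous nilpotent element. -/
def GradedNRClean {G : Type*} [Group G] {R : Type*} [Ring R]
    (𝒜 : G → AddSubgroup R) : Prop :=
  ∀ x : R, Homogeneous 𝒜 x →
    ∃ r n : R, GradedRegular 𝒜 r ∧ Homogeneous 𝒜 n ∧ IsNilpotent n ∧ x = r + n

/-- `𝒜` is a `G`-grading of the ring `R`. -/
structure IsGrading {G : Type*} [Group G] [DecidableEq G] {R : Type*} [Ring R]
    (𝒜 : G → AddSubgroup R) : Prop where
  one_mem : (1 : R) ∈ 𝒜 1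
  mul_mem : ∀ {g h : G} {a b : R}, a ∈ 𝒜 g → b ∈ 𝒜 h → a * b ∈ 𝒜 (g * h)
  isInternal : DirectSum.IsInternal 𝒜

/-- The `g`-th component of the `G`-grading on the group ring `R[G]` attached to a family
`ℬ` of additive subgroups of `R`: elements `∑ r_h h` with `r_h ∈ ℬ (g * h⁻¹)` for all `h`. -/
def groupRingComponent {G : Type*} [Group G] {R : Type*} [Ring R]
    (ℬ : G → AddSubgroup R) (g : G) : AddSubgroup (MonoidAlgebra R G) where
  carrier := {u | ∀ h : G, u.coeff h ∈ ℬ (g * h⁻¹)}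
  zero_mem' := fun h => by simpa using zero_mem (ℬ (g * h⁻¹))
  add_mem' := fun {a b} ha hb h => by
    show (a + b).coeff h ∈ ℬ (g * h⁻¹)
    rw [MonoidAlgebra.coeff_add, Finsupp.add_apply]
    exact add_mem (ha h) (hb h)
  neg_mem' := fun {a} ha h => by
    show (-a).coeff h ∈ ℬ (g * h⁻¹)
    rw [MonoidAlgebra.coeff_neg, Finsupp.neg_apply]
    exact neg_mem (ha h)

/-- A ring is NR-clean if every element is a sum of a von Neumann regular element and
a nilpotent element. -/
def NRClean (S : Type*) [Ring S] : Prop :=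
  ∀ x : S, ∃ r n : S, (∃ a : S, r = r * a * r) ∧ IsNilpotent n ∧ x = r + n

/-- If the group ring `R[G]` (with its `G`-grading) is graded NR-clean,
then `R` is an NR-clean ring. -/
theorem stmt18 {G : Type*} [Group G] [DecidableEq G] {R : Type*} [Ring R]
    (𝒜 : G → AddSubgroup R) (hG : IsGrading 𝒜)
    (h : GradedNRClean (groupRingComponent 𝒜)) : NRClean R := by
  classical
  intro x
  set ε : MonoidAlgebra R G →+* R :=
    MonoidAlgebra.liftNCRingHom (RingHom.id R) 1 (fun x y => by simp) with hε
  have hεs : ∀ (g : G) (r : R), ε (MonoidAlgebra.single g r) = r := by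
    intro g r
    simp [hε, MonoidAlgebra.liftNCRingHom, MonoidAlgebra.liftNC_single]
  obtain ⟨v, hv⟩ := hG.isInternal.surjective x
  set u : MonoidAlgebra R G := v.sum (fun g r => MonoidAlgebra.single g⁻¹ (r : R)) with hu
  have humem : u ∈ groupRingComponent 𝒜 1 := by
    intro k
    rw [hu, DFinsupp.sum, MonoidAlgebra.coeff_sum, Finsupp.finset_sum_apply]
    apply sum_mem
    intro g hg
    rw [MonoidAlgebra.coeff_single, Finsupp.single_apply]
    split
    · next heq =>
      have : (g : G) = k⁻¹ := by rw [← heq]; simp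
      rw [one_mul, ← this]
      exact (v g).2
    · exact zero_mem _
  have hεu : ε u = x := by
    rw [hu, map_dfinsuppSum]
    simp only [hεs]
    rw [← hv]
    simp only [DirectSum.coeAddMonoidHom, DirectSum.toAddMonoid, DFinsupp.liftAddHom_apply,
      DFinsupp.sumAddHom_apply]
    exact (DFinsupp.sumAddHom_apply (fun i => (𝒜 i).subtype) v).symm
  obtain ⟨r, n, ⟨-, a, -, hra⟩, -, hn, hsum⟩ := h u ⟨1, humem⟩
  refine ⟨ε r, ε n, ⟨ε a, ?_⟩, hn.map ε, ?_⟩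
  · rw [← map_mul, ← map_mul, ← hra]
  · rw [← hεu, hsum, map_add]
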